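/- Let d be odd, k = (d+1)/2, and let {f_i}_{i=1}^{d+1} ⊂ R^d be a simplex ETF with ⟨f_i, f_j⟩ = -1/d for i ≠ j. For any subset Λ ⊆ {1,...,d+1} with |Λ| = k, the vector g = (Σ_{i∈Λ} f_i)/||Σ_{i∈Λ} f_i|| satisfies max_{1 ≤ j ≤ d+1} |⟨g, f_j⟩| = 1/√d. -/

import Mathlib

/-- For `d` odd and `k = (d+1)/2`, the normalized sum `g` of any `k` vectors of a
simplex ETF in `ℝ^d` satisfies `max_j |⟨g, f_j⟩| = 1/√d`. -/
theorem max_coherence_normalized_sum_odd (d k : ℕ) (hd : 0 < d) (hodd : Odd d)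
    (hk : 2 * k = d + 1)
    (f : Fin (d + 1) → EuclideanSpace ℝ (Fin d))
    (hnorm : ∀ i, ‖f i‖ = 1)
    (hangle : ∀ i j, i ≠ j → (inner ℝ (f i) (f j) : ℝ) = -1 / d)
    (Λ : Finset (Fin (d + 1))) (hcard : Λ.card = k)
    (g : EuclideanSpace ℝ (Fin d)) (hg : g = ‖∑ i ∈ Λ, f i‖⁻¹ • ∑ i ∈ Λ, f i) :
    IsGreatest {x : ℝ | ∃ j : Fin (d + 1), x = |(inner ℝ g (f j) : ℝ)|}
      (1 / Real.sqrt d) := by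
  have hdR : (0:ℝ) < d := by exact_mod_cast hd
  have hkpos : 0 < k := by omega
  have hkR : (0:ℝ) < k := by exact_mod_cast hkpos
  have hdk : (d:ℝ) = 2 * k - 1 := by
    have : (d:ℝ) + 1 = 2 * k := by exact_mod_cast hk.symm
    linarith
  have hsqrt : 0 < Real.sqrt d := Real.sqrt_pos.2 hdR
  set s := ∑ i ∈ Λ, f i with hs
  have hin : ∀ j ∈ Λ, (inner ℝ s (f j) : ℝ) = k / d := by
    intro j hj
    rw [hs, sum_inner, ← Finset.add_sum_erase _ _ hj]
    have h1 : (inner ℝ (f j) (f j) : ℝ) = 1 := by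
      rw [real_inner_self_eq_norm_sq, hnorm j]; norm_num
    have h2 : ∑ i ∈ Λ.erase j, (inner ℝ (f i) (f j) : ℝ) = (k - 1 : ℝ) * (-1 / d) := by
      rw [Finset.sum_congr rfl (fun i hi => hangle i j (Finset.ne_of_mem_erase hi)),
        Finset.sum_const, Finset.card_erase_of_mem hj, hcard, nsmul_eq_mul]
      have : ((k - 1 : ℕ) : ℝ) = (k : ℝ) - 1 := by
        push_cast [Nat.cast_sub hkpos]; ring
      rw [this]
    rw [h1, h2]
    field_simp
    linarith [hdk]
  have hout : ∀ j ∉ Λ, (inner ℝ s (f j) : ℝ) = -(k / d) := by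
    intro j hj
    rw [hs, sum_inner]
    rw [Finset.sum_congr rfl (fun i hi => hangle i j (by rintro rfl; exact hj hi)),
      Finset.sum_const, hcard, nsmul_eq_mul]
    field_simp
  have hnorms : ‖s‖ = k / Real.sqrt d := by
    have hss : (inner ℝ s s : ℝ) = k ^ 2 / d := by
      nth_rewrite 2 [hs]
      rw [inner_sum, Finset.sum_congr rfl (fun j hj => hin j hj), Finset.sum_const,
        hcard, nsmul_eq_mul]
      ring
    have : ‖s‖ = Real.sqrt ((k:ℝ) ^ 2 / d) := by
      rw [← hss, real_inner_self_eq_norm_sq, Real.sqrt_sq (norm_nonneg s)]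
    rw [this, Real.sqrt_div (by positivity), Real.sqrt_sq hkR.le]
  have key : ∀ j, |(inner ℝ g (f j) : ℝ)| = 1 / Real.sqrt d := by
    intro j
    rw [hg, real_inner_smul_left, hnorms]
    have hd' : Real.sqrt d * Real.sqrt d = d := Real.mul_self_sqrt hdR.le
    by_cases hj : j ∈ Λ
    · rw [hin j hj, abs_of_nonneg (by positivity)]
      field_simp
      rw [sq]; exact hd'
    · rw [hout j hj]
      rw [mul_neg, abs_neg, abs_of_nonneg (by positivity)]
      field_simp
      rw [sq]; exact hd'
  constructor
  · exact ⟨0, (key 0).symm⟩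
  · rintro x ⟨j, rfl⟩
    rw [key j]
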